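/- The one-relator group G = ⟨a, b | a⁻¹ = [a, bab⁻¹]⟩ (the Baumslag–Gersten group) satisfies: the generator a lies in every term of the derived series of G. -/

import Mathlib

open scoped commutatorElement

theorem stmt_18 :
    let a : FreeGroup (Fin 2) := FreeGroup.of 0
    let b : FreeGroup (Fin 2) := FreeGroup.of 1
    ∀ n : ℕ,
      PresentedGroup.of (rels := ({⁅a, b * a * b⁻¹⁆ * a} : Set (FreeGroup (Fin 2)))) 0 ∈
        derivedSeries (PresentedGroup ({⁅a, b * a * b⁻¹⁆ * a} : Set (FreeGroup (Fin 2)))) n := by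
  intro a b n
  set rels : Set (FreeGroup (Fin 2)) := {⁅a, b * a * b⁻¹⁆ * a} with hrels
  set A : PresentedGroup rels := PresentedGroup.of 0 with hA
  set B : PresentedGroup rels := PresentedGroup.of 1 with hB
  have hrel : ⁅A, B * A * B⁻¹⁆ * A = 1 := by
    have : PresentedGroup.mk rels (⁅a, b * a * b⁻¹⁆ * a) = 1 := by
      apply (QuotientGroup.eq_one_iff _).2
      exact Subgroup.subset_normalClosure rfl
    simp only [commutatorElement_def, map_mul, map_inv] at this ⊢
    exact this
  have key : A = ⁅A, B * A * B⁻¹⁆⁻¹ := eq_inv_of_mul_eq_one_right hrel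
  induction n with
  | zero => exact Subgroup.mem_top _
  | succ n ih =>
    rw [derivedSeries_succ]
    rw [key]
    apply Subgroup.inv_mem
    exact Subgroup.commutator_mem_commutator ih
      ((derivedSeries_normal _ n).conj_mem A ih B)
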